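/- The binding information B(X_A) = H(X_A) - Σ_{α∈A} H(X_α | X_{A\{α}}) of a finite family of discrete random variables is nonnegative. -/

import Mathlib

open scoped Classical
open Finset Real

noncomputable section

/-- Probability of the event `X = s` under weights `p` on a finite sample space. -/
def pr {Ω : Type*} [Fintype Ω] (p : Ω → ℝ) {S : Type*} (X : Ω → S) (s : S) : ℝ :=
  ∑ ω, if X ω = s then p ω else 0

/-- Shannon entropy of a finitely-valued random variable `X`. -/
def ent {Ω : Type*} [Fintype Ω] (p : Ω → ℝ) {S : Type*} [Fintype S] (X : Ω → S) : ℝ :=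
  ∑ s, Real.negMulLog (pr p X s)

/-- Conditional entropy `H(X | Y)`. -/
def condEnt {Ω : Type*} [Fintype Ω] (p : Ω → ℝ) {S T : Type*} [Fintype S] [Fintype T]
    (X : Ω → S) (Y : Ω → T) : ℝ :=
  ent p (fun ω => (X ω, Y ω)) - ent p Y

/-- The joint random variable of a finite family. -/
def jointVar {Ω : Type*} {A : Type*} {S : A → Type*} (X : ∀ α, Ω → S α) :
    Ω → ∀ α, S α :=
  fun ω α => X α ω

/-- The tuple of all variables except `α`. -/
def restVar {Ω : Type*} {A : Type*} {S : A → Type*} (X : ∀ α, Ω → S α) (α : A) :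
    Ω → ∀ β : {β : A // β ≠ α}, S β.1 :=
  fun ω β => X β.1 ω

/-- Binding information `B(X_A)`. -/
def bindingInfo {Ω : Type*} [Fintype Ω] (p : Ω → ℝ) {A : Type*} [Fintype A]
    {S : A → Type*} [∀ α, Fintype (S α)] (X : ∀ α, Ω → S α) : ℝ :=
  ent p (jointVar X) - ∑ α, condEnt p (X α) (restVar X α)

/-- Multi-information `I(X_A)`. -/
def multiInfo {Ω : Type*} [Fintype Ω] (p : Ω → ℝ) {A : Type*} [Fintype A]
    {S : A → Type*} [∀ α, Fintype (S α)] (X : ∀ α, Ω → S α) : ℝ :=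
  (∑ α, ent p (X α)) - ent p (jointVar X)


section Helpers

set_option linter.unusedSectionVars false

variable {Ω : Type*} [Fintype Ω] (p : Ω → ℝ)

lemma pr_nonneg' (hp : ∀ ω, 0 ≤ p ω) {S : Type*} (X : Ω → S) (s : S) : 0 ≤ pr p X s :=
  Finset.sum_nonneg fun ω _ => by split <;> simp [hp ω]

lemma sum_pr' {S : Type*} [Fintype S] (X : Ω → S) : ∑ s, pr p X s = ∑ ω, p ω := by
  unfold pr; rw [Finset.sum_comm]; simp

lemma pr_comp_eq_zero {S T : Type*} (f : S → T) (X : Ω → S) {t : T}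
    (ht : ∀ s, f s ≠ t) : pr p (fun ω => f (X ω)) t = 0 := by
  unfold pr
  exact Finset.sum_eq_zero fun ω _ => by simp [ht (X ω)]

lemma ent_comp {S T : Type*} [Fintype S] [Fintype T] {f : S → T}
    (hf : Function.Injective f) (X : Ω → S) :
    ent p (fun ω => f (X ω)) = ent p X := by
  unfold ent
  rw [← Finset.sum_subset (Finset.subset_univ (Finset.univ.image f))
    (fun t _ ht => by
      rw [pr_comp_eq_zero p f X (fun s hs => ht (Finset.mem_image.2 ⟨s, Finset.mem_univ s, hs⟩))]
      simp),
    Finset.sum_image (fun a _ b _ h => hf h)]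
  refine Finset.sum_congr rfl fun s _ => ?_
  congr 1
  unfold pr
  exact Finset.sum_congr rfl fun ω _ => by simp [hf.eq_iff]

lemma ent_subsingleton {S : Type*} [Fintype S] [Subsingleton S]
    (hsum : ∑ ω, p ω = 1) (X : Ω → S) : ent p X = 0 := by
  rcases isEmpty_or_nonempty S with h | h
  · simp [ent]
  · obtain ⟨s⟩ := h
    have huniv : (Finset.univ : Finset S) = {s} := by
      ext t; simp [Subsingleton.elim t s]
    rw [ent, huniv, Finset.sum_singleton]
    have : pr p X s = 1 := by
      rw [pr, ← hsum]
      exact Finset.sum_congr rfl fun ω _ => by simp [Subsingleton.elim (X ω) s]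
    simp [this]

lemma marg1' {S T U : Type*} [Fintype T] (X : Ω → S) (Y : Ω → T) (Z : Ω → U) (x : S) (z : U) :
    ∑ y, pr p (fun ω => (X ω, Y ω, Z ω)) (x, y, z) = pr p (fun ω => (X ω, Z ω)) (x, z) := by
  unfold pr
  rw [Finset.sum_comm]
  refine Finset.sum_congr rfl fun ω _ => ?_
  by_cases h : X ω = x ∧ Z ω = z
  · simp [Prod.ext_iff, h, Finset.sum_ite_eq]
  · rw [Finset.sum_eq_zero fun y _ => by simp [Prod.ext_iff]; tauto]
    rw [eq_comm, if_neg (by simp [Prod.ext_iff]; tauto)]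

lemma marg2' {S T U : Type*} [Fintype S] (X : Ω → S) (Y : Ω → T) (Z : Ω → U) (y : T) (z : U) :
    ∑ x, pr p (fun ω => (X ω, Y ω, Z ω)) (x, y, z) = pr p (fun ω => (Y ω, Z ω)) (y, z) := by
  unfold pr
  rw [Finset.sum_comm]
  refine Finset.sum_congr rfl fun ω _ => ?_
  by_cases h : Y ω = y ∧ Z ω = z
  · simp [Prod.ext_iff, h, Finset.sum_ite_eq]
  · rw [Finset.sum_eq_zero fun x _ => by simp [Prod.ext_iff]; tauto]
    rw [eq_comm, if_neg (by simp [Prod.ext_iff]; tauto)]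

lemma marg3' {S U : Type*} [Fintype S] (X : Ω → S) (Z : Ω → U) (z : U) :
    ∑ x', pr p (fun ω => (X ω, Z ω)) (x', z) = pr p Z z := by
  unfold pr
  rw [Finset.sum_comm]
  refine Finset.sum_congr rfl fun ω _ => ?_
  by_cases h : Z ω = z
  · simp [Prod.ext_iff, h, Finset.sum_ite_eq]
  · rw [Finset.sum_eq_zero fun x _ => by simp [Prod.ext_iff]; tauto]
    simp [h]

lemma sum3 {S T U : Type*} [Fintype S] [Fintype T] [Fintype U] (f : S × T × U → ℝ) :
    ∑ i, f i = ∑ z, ∑ x, ∑ y, f (x, y, z) := by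
  rw [Fintype.sum_prod_type, Finset.sum_comm, Fintype.sum_prod_type, Finset.sum_comm]
  exact Finset.sum_congr rfl fun z _ => Finset.sum_comm

lemma gibbs_point {a b : ℝ} (ha : 0 ≤ a) (hb : 0 ≤ b) (h : a ≠ 0 → 0 < b) :
    a - b ≤ a * (Real.log a - Real.log b) := by
  rcases eq_or_lt_of_le ha with h0 | h0
  · simp [← h0, hb]
  · have hb' := h h0.ne'
    have h1 := Real.log_le_sub_one_of_pos (div_pos hb' h0)
    rw [Real.log_div hb'.ne' h0.ne'] at h1
    have h2 := mul_le_mul_of_nonneg_left h1 ha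
    have h3 : a * (b / a - 1) = b - a := by field_simp
    nlinarith [h2, h3]

lemma ent_submodular (hp : ∀ ω, 0 ≤ p ω) (hsum : ∑ ω, p ω = 1)
    {S T U : Type*} [Fintype S] [Fintype T] [Fintype U]
    (X : Ω → S) (Y : Ω → T) (Z : Ω → U) :
    ent p (fun ω => (X ω, Y ω, Z ω)) + ent p Z ≤
      ent p (fun ω => (X ω, Z ω)) + ent p (fun ω => (Y ω, Z ω)) := by
  set P : S × T × U → ℝ := pr p (fun ω => (X ω, Y ω, Z ω)) with hPdef
  set q₁ : S × U → ℝ := pr p (fun ω => (X ω, Z ω)) with hq₁def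
  set q₂ : T × U → ℝ := pr p (fun ω => (Y ω, Z ω)) with hq₂def
  set r : U → ℝ := pr p Z with hrdef
  have hPn : ∀ i, 0 ≤ P i := fun i => pr_nonneg' p hp _ i
  have hq₁n : ∀ j, 0 ≤ q₁ j := fun j => pr_nonneg' p hp _ j
  have hq₂n : ∀ j, 0 ≤ q₂ j := fun j => pr_nonneg' p hp _ j
  have hrn : ∀ z, 0 ≤ r z := fun z => pr_nonneg' p hp _ z
  have hm1 : ∀ x z, ∑ y, P (x, y, z) = q₁ (x, z) := fun x z => marg1' p X Y Z x z
  have hm2 : ∀ y z, ∑ x, P (x, y, z) = q₂ (y, z) := fun y z => marg2' p X Y Z y z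
  have hm3 : ∀ z, ∑ x, q₁ (x, z) = r z := fun z => marg3' p X Z z
  have hm4 : ∀ z, ∑ y, q₂ (y, z) = r z := fun z => marg3' p Y Z z
  have hrsum : ∑ z, r z = 1 := by rw [hrdef, sum_pr' p Z, hsum]
  have hPsum : ∑ i, P i = 1 := by rw [hPdef, sum_pr' p _, hsum]
  set Q : S × T × U → ℝ :=
    fun i => if r i.2.2 = 0 then 0 else q₁ (i.1, i.2.2) * q₂ i.2 / r i.2.2 with hQdef
  have hQn : ∀ i, 0 ≤ Q i := by
    intro i
    simp only [hQdef]
    split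
    · exact le_refl 0
    · exact div_nonneg (mul_nonneg (hq₁n _) (hq₂n _)) (hrn _)
  have hQsum : ∑ i, Q i ≤ 1 := by
    have hz : ∀ z : U, ∑ x, ∑ y, Q (x, y, z) = if r z = 0 then 0 else r z := by
      intro z
      by_cases hr0 : r z = 0
      · simp [hQdef, hr0]
      · rw [if_neg hr0]
        have : ∀ x : S, ∑ y, Q (x, y, z) = q₁ (x, z) * r z / r z := by
          intro x
          simp only [hQdef, if_neg hr0]
          rw [← Finset.sum_div, ← Finset.mul_sum, hm4]
        rw [Finset.sum_congr rfl fun x _ => this x, ← Finset.sum_div, ← Finset.sum_mul, hm3]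
        field_simp
    calc ∑ i, Q i = ∑ z, ∑ x, ∑ y, Q (x, y, z) := sum3 Q
      _ = ∑ z, if r z = 0 then 0 else r z := Finset.sum_congr rfl fun z _ => hz z
      _ ≤ ∑ z, r z := Finset.sum_le_sum fun z _ => by split <;> simp [hrn z]
      _ = 1 := hrsum
  set L : S × T × U → ℝ := fun i =>
    P i * (Real.log (P i) + Real.log (r i.2.2) - Real.log (q₁ (i.1, i.2.2)) - Real.log (q₂ i.2))
    with hLdef
  have hpoint : ∀ i : S × T × U, P i - Q i ≤ L i := by
    rintro ⟨x, y, z⟩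
    by_cases hPi : P (x, y, z) = 0
    · simp only [hLdef, hPi, zero_mul, zero_sub]
      simpa using hQn (x, y, z)
    · have hP0 : 0 < P (x, y, z) := lt_of_le_of_ne (hPn _) (Ne.symm hPi)
      have hq₁0 : 0 < q₁ (x, z) := by
        rw [← hm1]
        exact lt_of_lt_of_le hP0 (Finset.single_le_sum (fun y _ => hPn (x, y, z)) (Finset.mem_univ y))
      have hq₂0 : 0 < q₂ (y, z) := by
        rw [← hm2]
        exact lt_of_lt_of_le hP0 (Finset.single_le_sum (fun x _ => hPn (x, y, z)) (Finset.mem_univ x))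
      have hr0 : 0 < r z := by
        rw [← hm3]
        exact lt_of_lt_of_le hq₁0 (Finset.single_le_sum (fun x _ => hq₁n (x, z)) (Finset.mem_univ x))
      have hQi : Q (x, y, z) = q₁ (x, z) * q₂ (y, z) / r z := by
        simp only [hQdef, if_neg hr0.ne']
      have hQ0 : 0 < Q (x, y, z) := by
        rw [hQi]; positivity
      have hlogQ : Real.log (Q (x, y, z)) =
          Real.log (q₁ (x, z)) + Real.log (q₂ (y, z)) - Real.log (r z) := by
        rw [hQi, Real.log_div (mul_ne_zero hq₁0.ne' hq₂0.ne') hr0.ne',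
          Real.log_mul hq₁0.ne' hq₂0.ne']
      have := gibbs_point (hPn (x, y, z)) (hQn (x, y, z)) (fun _ => hQ0)
      rw [hlogQ] at this
      simp only [hLdef]
      nlinarith [this]
  have key : 0 ≤ ∑ i, L i := by
    have h1 : ∑ i, (P i - Q i) ≤ ∑ i, L i := Finset.sum_le_sum fun i _ => hpoint i
    rw [Finset.sum_sub_distrib, hPsum] at h1
    linarith
  have eXYZ : ent p (fun ω => (X ω, Y ω, Z ω)) = ∑ i, P i * (-Real.log (P i)) := by
    rw [ent]
    exact Finset.sum_congr rfl fun i _ => by rw [Real.negMulLog]; ring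
  have eXZ : ent p (fun ω => (X ω, Z ω)) = ∑ i : S × T × U, P i * (-Real.log (q₁ (i.1, i.2.2))) := by
    calc ent p (fun ω => (X ω, Z ω)) = ∑ x, ∑ z, Real.negMulLog (q₁ (x, z)) := by
          rw [ent, Fintype.sum_prod_type]
      _ = ∑ z, ∑ x, Real.negMulLog (q₁ (x, z)) := Finset.sum_comm
      _ = ∑ z, ∑ x, ∑ y, P (x, y, z) * (-Real.log (q₁ (x, z))) := by
          refine Finset.sum_congr rfl fun z _ => Finset.sum_congr rfl fun x _ => ?_
          rw [← Finset.sum_mul, hm1, Real.negMulLog]; ring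
      _ = ∑ i : S × T × U, P i * (-Real.log (q₁ (i.1, i.2.2))) :=
          (sum3 (fun i => P i * (-Real.log (q₁ (i.1, i.2.2))))).symm
  have eYZ : ent p (fun ω => (Y ω, Z ω)) = ∑ i : S × T × U, P i * (-Real.log (q₂ i.2)) := by
    calc ent p (fun ω => (Y ω, Z ω)) = ∑ y, ∑ z, Real.negMulLog (q₂ (y, z)) := by
          rw [ent, Fintype.sum_prod_type]
      _ = ∑ z, ∑ y, Real.negMulLog (q₂ (y, z)) := Finset.sum_comm
      _ = ∑ z, ∑ y, ∑ x, P (x, y, z) * (-Real.log (q₂ (y, z))) := by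
          refine Finset.sum_congr rfl fun z _ => Finset.sum_congr rfl fun y _ => ?_
          rw [← Finset.sum_mul, hm2, Real.negMulLog]; ring
      _ = ∑ z, ∑ x, ∑ y, P (x, y, z) * (-Real.log (q₂ (y, z))) :=
          Finset.sum_congr rfl fun z _ => Finset.sum_comm
      _ = ∑ i : S × T × U, P i * (-Real.log (q₂ i.2)) :=
          (sum3 (fun i => P i * (-Real.log (q₂ i.2)))).symm
  have eZ : ent p Z = ∑ i : S × T × U, P i * (-Real.log (r i.2.2)) := by
    calc ent p Z = ∑ z, Real.negMulLog (r z) := rfl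
      _ = ∑ z, ∑ x, q₁ (x, z) * (-Real.log (r z)) := by
          refine Finset.sum_congr rfl fun z _ => ?_
          rw [← Finset.sum_mul, hm3, Real.negMulLog]; ring
      _ = ∑ z, ∑ x, ∑ y, P (x, y, z) * (-Real.log (r z)) := by
          refine Finset.sum_congr rfl fun z _ => Finset.sum_congr rfl fun x _ => ?_
          rw [← Finset.sum_mul, hm1]
      _ = ∑ i : S × T × U, P i * (-Real.log (r i.2.2)) :=
          (sum3 (fun i => P i * (-Real.log (r i.2.2)))).symm
  have expand : ∑ i, L i =
      (ent p (fun ω => (X ω, Z ω)) + ent p (fun ω => (Y ω, Z ω))) -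
        (ent p (fun ω => (X ω, Y ω, Z ω)) + ent p Z) := by
    rw [eXYZ, eXZ, eYZ, eZ, ← Finset.sum_add_distrib, ← Finset.sum_add_distrib,
      ← Finset.sum_sub_distrib]
    exact Finset.sum_congr rfl fun i _ => by rw [hLdef]; ring
  linarith [key, expand.symm.le]


lemma condEnt_comp {S T T' : Type*} [Fintype S] [Fintype T] [Fintype T'] {f : T → T'}
    (hf : Function.Injective f) (X : Ω → S) (Y : Ω → T) :
    condEnt p X (fun ω => f (Y ω)) = condEnt p X Y := by
  unfold condEnt
  rw [ent_comp p hf Y]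
  congr 1
  have h2 : Function.Injective (Prod.map (@id S) f) :=
    Function.Injective.prodMap Function.injective_id hf
  exact ent_comp p h2 (fun ω => (X ω, Y ω))

lemma condEnt_pair_le (hp : ∀ ω, 0 ≤ p ω) (hsum : ∑ ω, p ω = 1)
    {S T U : Type*} [Fintype S] [Fintype T] [Fintype U]
    (X : Ω → S) (Y : Ω → T) (Z : Ω → U) :
    condEnt p X (fun ω => (Y ω, Z ω)) ≤ condEnt p X Z := by
  have h := ent_submodular p hp hsum X Y Z
  unfold condEnt
  linarith

end Helpers

/-- Truncated tuple of variables with index below `k`. -/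
def truncVar {Ω A : Type*} [Fintype A] {S : A → Type*} (X : ∀ α, Ω → S α)
    (e : A ≃ Fin (Fintype.card A)) (k : ℕ) :
    Ω → ∀ β : {β : A // (e β : ℕ) < k}, S β.1 :=
  fun ω β => X β.1 ω


/-- The binding information of a finite family of discrete random
variables is nonnegative. -/
theorem bindingInfo_nonneg {Ω : Type*} [Fintype Ω] (p : Ω → ℝ)
    (hp : ∀ ω, 0 ≤ p ω) (hsum : ∑ ω, p ω = 1)
    {A : Type*} [Fintype A] {S : A → Type*} [∀ α, Fintype (S α)]
    (X : ∀ α, Ω → S α) :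
    0 ≤ bindingInfo p X := by
  classical
  set n := Fintype.card A with hn
  set e := Fintype.equivFin A with he
  set V := truncVar X e with hV
  have chain : ∀ k, k ≤ n → ent p (V k) =
      ∑ α ∈ Finset.univ.filter (fun α => (e α : ℕ) < k), condEnt p (X α) (V (e α)) := by
    intro k
    induction k with
    | zero =>
      intro _
      have h1 : Finset.univ.filter (fun α : A => (e α : ℕ) < 0) = ∅ := by
        ext α; simp
      haveI : IsEmpty {β : A // (e β : ℕ) < 0} := ⟨fun β => Nat.not_lt_zero _ β.2⟩
      haveI : Unique (∀ β : {β : A // (e β : ℕ) < 0}, S β.1) := Pi.uniqueOfIsEmpty _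
      rw [h1, ent_subsingleton p hsum (V 0)]
      simp
    | succ k ih =>
      intro hk1
      have hk : k < n := hk1
      set α₀ := e.symm ⟨k, hk⟩ with hα₀
      have heα₀ : (e α₀ : ℕ) = k := by rw [hα₀, Equiv.apply_symm_apply]
      let ψ : (∀ β : {β : A // (e β : ℕ) < k + 1}, S β.1) →
          (S α₀ × ∀ β : {β : A // (e β : ℕ) < k}, S β.1) :=
        fun g => (g ⟨α₀, by rw [heα₀]; exact Nat.lt_succ_self k⟩,
                  fun β => g ⟨β.1, Nat.lt_succ_of_lt β.2⟩)
      have hψ : Function.Injective ψ := by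
        intro g g' hgg
        funext β
        rcases Nat.lt_succ_iff_lt_or_eq.mp β.2 with hlt | heq
        · exact congrFun (congrArg Prod.snd hgg) ⟨β.1, hlt⟩
        · obtain ⟨b, hb⟩ := β
          have hbα : b = α₀ :=
            e.injective (Fin.ext (by rw [heα₀]; exact heq))
          subst hbα
          exact congrArg Prod.fst hgg
      have hpair : ent p (V (k + 1)) = ent p (fun ω => (X α₀ ω, V k ω)) := by
        rw [← ent_comp p hψ (V (k + 1))]
        rfl
      have hiff : ∀ α, (e α : ℕ) = k ↔ α = α₀ := by
        intro α
        rw [hα₀, Equiv.eq_symm_apply]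
        exact ⟨fun h => Fin.ext h, fun h => congrArg Fin.val h⟩
      have hα₀notmem : α₀ ∉ Finset.univ.filter (fun α : A => (e α : ℕ) < k) := by
        simp [heα₀]
      have hfilter : Finset.univ.filter (fun α : A => (e α : ℕ) < k + 1) =
          insert α₀ (Finset.univ.filter fun α : A => (e α : ℕ) < k) := by
        ext α
        simp only [Finset.mem_filter, Finset.mem_univ, true_and, Finset.mem_insert,
          Nat.lt_succ_iff_lt_or_eq, hiff α]
        tauto
      rw [hfilter, Finset.sum_insert hα₀notmem, ← ih (le_of_lt hk), hpair, heα₀]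
      simp only [condEnt]
      ring
  have hle : ∀ α, condEnt p (X α) (restVar X α) ≤ condEnt p (X α) (V (e α : ℕ)) := by
    intro α
    let W : Ω → ∀ β : {β : A // β ≠ α ∧ ¬ ((e β : ℕ) < (e α : ℕ))}, S β.1 :=
      fun ω β => X β.1 ω
    let φ : (∀ β : {β : A // β ≠ α}, S β.1) →
        ((∀ β : {β : A // β ≠ α ∧ ¬ ((e β : ℕ) < (e α : ℕ))}, S β.1) ×
          (∀ β : {β : A // (e β : ℕ) < (e α : ℕ)}, S β.1)) :=
      fun g => (fun β => g ⟨β.1, β.2.1⟩,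
        fun β => g ⟨β.1, fun h => absurd β.2 (by rw [h]; exact lt_irrefl _)⟩)
    have hφ : Function.Injective φ := by
      intro g g' hgg
      funext β
      by_cases hlt : (e β.1 : ℕ) < (e α : ℕ)
      · exact congrFun (congrArg Prod.snd hgg) ⟨β.1, hlt⟩
      · exact congrFun (congrArg Prod.fst hgg) ⟨β.1, ⟨β.2, hlt⟩⟩
    have h1 : condEnt p (X α) (fun ω => (W ω, V (e α : ℕ) ω)) =
        condEnt p (X α) (restVar X α) :=
      condEnt_comp p hφ (X α) (restVar X α)
    rw [← h1]
    exact condEnt_pair_le p hp hsum (X α) W (V (e α : ℕ))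
  have hjoint : ent p (jointVar X) = ent p (V n) := by
    let χ : (∀ α, S α) → (∀ β : {β : A // (e β : ℕ) < n}, S β.1) := fun g β => g β.1
    have hχ : Function.Injective χ := fun g g' h => funext fun α => congrFun h ⟨α, (e α).isLt⟩
    exact (ent_comp p hχ (jointVar X)).symm
  have hfull : Finset.univ.filter (fun α : A => (e α : ℕ) < n) = Finset.univ := by
    ext α; simpa [hn] using (e α).isLt
  have hchain := chain n le_rfl
  rw [hfull] at hchain
  have hsums : ∑ α, condEnt p (X α) (restVar X α) ≤ ∑ α, condEnt p (X α) (V (e α : ℕ)) :=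
    Finset.sum_le_sum fun α _ => hle α
  unfold bindingInfo
  linarith [hjoint, hchain, hsums]
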